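/- arXiv:1404.1633 — 4 statements merged into one kernel-verified Lean document; each statement's English description precedes it below -/
import Mathlib

section
/- Let n ≥ 1, let 0 < β < n be constant, let 1 < q₁ < n/β and define q₂ by 1/q₂ = 1/q₁ − β/n. Then there exists a constant C > 0 such that for every locally integrable function f on ℝⁿ and every k ∈ ℤ, ‖(H_β f)·χ_k‖_{L^{q₂}(ℝⁿ)} ≤ C Σ_{j=−∞}^{k} 2^{(j−k) n (1 − 1/q₁)} ‖f χ_j‖_{L^{q₁}(ℝⁿ)}. (This is the constant-exponent version of the key block estimate (3.3) in the proof of Theorem 3.1.) -/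
open MeasureTheory ENNReal

/-- The dyadic annulus `A_k = B_k \ B_{k-1} = {x : 2^(k-1) < ‖x‖ ≤ 2^k}` in `ℝⁿ`. -/
def annulus (n : ℕ) (k : ℤ) : Set (EuclideanSpace ℝ (Fin n)) :=
  {x | (2 : ℝ) ^ (k - 1) < ‖x‖ ∧ ‖x‖ ≤ (2 : ℝ) ^ k}

/-- The n-dimensional fractional Hardy operator
`H_β f(x) = |x|^{β−n} ∫_{|t|<|x|} f(t) dt`. -/
noncomputable def hardyOp (n : ℕ) (β : ℝ) (f : EuclideanSpace ℝ (Fin n) → ℝ)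
    (x : EuclideanSpace ℝ (Fin n)) : ℝ :=
  ‖x‖ ^ (β - n) * ∫ t in {t : EuclideanSpace ℝ (Fin n) | ‖t‖ < ‖x‖}, f t

lemma measurableSet_annulus (n : ℕ) (k : ℤ) : MeasurableSet (annulus n k) :=
  (measurableSet_lt measurable_const measurable_norm).inter
    (measurableSet_le measurable_norm measurable_const)

lemma exists_mem_annulus {n : ℕ} (x : EuclideanSpace ℝ (Fin n)) (k : ℤ) (hx0 : x ≠ 0)
    (hx : ‖x‖ ≤ (2:ℝ)^k) : ∃ j : ℤ, j ≤ k ∧ x ∈ annulus n j := by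
  have hpos : 0 < ‖x‖ := norm_pos_iff.mpr hx0
  set L := Real.logb 2 ‖x‖ with hL
  set j : ℤ := ⌈L⌉ with hj
  have h1 : L ≤ (j:ℝ) := Int.le_ceil _
  have h2 : (j:ℝ) - 1 < L := by
    have := Int.ceil_lt_add_one L; push_cast at this ⊢; linarith
  have hrl : (2:ℝ) ^ L = ‖x‖ := Real.rpow_logb (by norm_num) (by norm_num) hpos
  refine ⟨j, ?_, ?_, ?_⟩
  · refine Int.ceil_le.mpr ?_
    have : (2:ℝ) ^ L ≤ (2:ℝ) ^ ((k:ℤ):ℝ) := by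
      rw [hrl, Real.rpow_intCast]; exact hx
    exact (Real.rpow_le_rpow_left_iff one_lt_two).mp this
  · have : (2:ℝ) ^ ((j:ℝ) - 1) < (2:ℝ) ^ L :=
      Real.rpow_lt_rpow_of_exponent_lt one_lt_two h2
    rw [hrl] at this
    calc (2:ℝ) ^ (j - 1) = (2:ℝ) ^ (((j - 1 : ℤ)):ℝ) := (Real.rpow_intCast 2 (j-1)).symm
    _ < ‖x‖ := by push_cast; convert this using 2
  · have : (2:ℝ) ^ L ≤ (2:ℝ) ^ ((j:ℤ):ℝ) := Real.rpow_le_rpow_of_exponent_le one_le_two h1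
    rw [hrl, Real.rpow_intCast] at this; exact this

lemma lintegral_ball_le {n : ℕ} (hn : 1 ≤ n) (g : EuclideanSpace ℝ (Fin n) → ℝ≥0∞) (k : ℤ) :
    ∫⁻ t in {t : EuclideanSpace ℝ (Fin n) | ‖t‖ ≤ (2:ℝ)^k}, g t ≤
      ∑' j : {j : ℤ // j ≤ k}, ∫⁻ t in annulus n (j : ℤ), g t := by
  haveI : Nontrivial (EuclideanSpace ℝ (Fin n)) :=
    Module.nontrivial_of_finrank_pos (R := ℝ) (by simp; omega)
  have hsub : {t : EuclideanSpace ℝ (Fin n) | ‖t‖ ≤ (2:ℝ)^k} ⊆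
      {(0 : EuclideanSpace ℝ (Fin n))} ∪ ⋃ j : {j : ℤ // j ≤ k}, annulus n (j : ℤ) := by
    intro t ht
    by_cases ht0 : t = 0
    · exact Or.inl ht0
    · obtain ⟨j, hjk, hj⟩ := exists_mem_annulus t k ht0 ht
      exact Or.inr (Set.mem_iUnion.mpr ⟨⟨j, hjk⟩, hj⟩)
  calc ∫⁻ t in {t : EuclideanSpace ℝ (Fin n) | ‖t‖ ≤ (2:ℝ)^k}, g t
      ≤ ∫⁻ t in {(0 : EuclideanSpace ℝ (Fin n))} ∪ ⋃ j : {j : ℤ // j ≤ k}, annulus n (j:ℤ), g t :=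
        lintegral_mono_set hsub
    _ ≤ (∫⁻ t in {(0 : EuclideanSpace ℝ (Fin n))}, g t) +
          ∫⁻ t in ⋃ j : {j : ℤ // j ≤ k}, annulus n (j:ℤ), g t := lintegral_union_le _ _ _
    _ ≤ 0 + ∑' j : {j : ℤ // j ≤ k}, ∫⁻ t in annulus n (j:ℤ), g t := by
        gcongr
        · exact le_of_eq (setLIntegral_measure_zero _ _ (measure_singleton 0))
        · exact lintegral_iUnion_le _ _
    _ = _ := zero_add _

lemma holder_annulus {n : ℕ} {q₁ : ℝ} (hq₁ : 1 < q₁) (f : EuclideanSpace ℝ (Fin n) → ℝ)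
    (hf : AEStronglyMeasurable f volume) (j : ℤ) :
    ∫⁻ t in annulus n j, (‖f t‖₊ : ℝ≥0∞) ≤
      eLpNorm ((annulus n j).indicator f) (ENNReal.ofReal q₁) volume *
        (volume (annulus n j)) ^ (1 - 1/q₁) := by
  have hq₁0 : (0:ℝ) < q₁ := by linarith
  set r : ℝ := 1 - 1/q₁ with hr
  have hr0 : 0 < r := by
    rw [hr]
    have : 1/q₁ < 1 := by rw [div_lt_one hq₁0]; linarith
    linarith
  have hconj : q₁.HolderConjugate r⁻¹ := by
    rw [Real.holderConjugate_iff]; constructor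
    · exact hq₁
    · rw [inv_inv, hr]; field_simp; ring
  set A := annulus n j with hA
  have hAm : MeasurableSet A := measurableSet_annulus n j
  have key : ∀ t, A.indicator (fun t => (‖f t‖₊ : ℝ≥0∞)) t =
      ((fun t => (‖A.indicator f t‖₊ : ℝ≥0∞)) * A.indicator (fun _ => (1:ℝ≥0∞))) t := by
    intro t
    by_cases ht : t ∈ A <;>
      simp [Set.indicator_of_mem, Set.indicator_of_notMem, ht]
  rw [← lintegral_indicator hAm, lintegral_congr key]
  have hm1 : AEMeasurable (fun t => (‖A.indicator f t‖₊ : ℝ≥0∞)) volume :=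
    AEMeasurable.enorm (AEStronglyMeasurable.aemeasurable (AEStronglyMeasurable.indicator hf hAm))
  have hm2 : AEMeasurable (A.indicator (fun _ => (1:ℝ≥0∞))) volume :=
    (measurable_const.indicator hAm).aemeasurable
  refine le_trans (ENNReal.lintegral_mul_le_Lp_mul_Lq volume hconj hm1 hm2) (le_of_eq ?_)
  congr 1
  · rw [eLpNorm_eq_lintegral_rpow_enorm_toReal (by simp [hq₁0]) ofReal_ne_top,
      ENNReal.toReal_ofReal hq₁0.le]; rfl
  · have : ∀ t, A.indicator (fun _ => (1:ℝ≥0∞)) t ^ r⁻¹ = A.indicator (fun _ => (1:ℝ≥0∞)) t := by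
      intro t
      by_cases ht : t ∈ A <;>
        simp [Set.indicator_of_mem, Set.indicator_of_notMem, ht,
          ENNReal.zero_rpow_of_pos (inv_pos.mpr hr0)]
    simp only [Pi.mul_apply] at this ⊢
    rw [lintegral_congr this, lintegral_indicator hAm]
    simp [one_div, inv_inv]

lemma volume_annulus_le {n : ℕ} (j : ℤ) :
    volume (annulus n j) ≤
      (2:ℝ≥0∞) ^ ((j:ℝ) * n) * volume (Metric.ball (0 : EuclideanSpace ℝ (Fin n)) 1) := by
  have h1 : annulus n j ⊆ Metric.closedBall (0 : EuclideanSpace ℝ (Fin n)) ((2:ℝ)^j) := by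
    intro x hx; rw [Metric.mem_closedBall, dist_zero_right]; exact hx.2
  have h2 := Measure.addHaar_closedBall (volume : Measure (EuclideanSpace ℝ (Fin n)))
      0 (r := (2:ℝ)^j) (by positivity)
  rw [finrank_euclideanSpace_fin] at h2
  refine le_trans (measure_mono h1) (le_of_eq ?_)
  rw [h2]
  congr 1
  rw [show ((2:ℝ)^j)^n = (2:ℝ) ^ ((j:ℝ) * n) by
    rw [← Real.rpow_intCast 2 j, ← Real.rpow_natCast (_ ^ _) n, ← Real.rpow_mul (by norm_num)],
    ← ENNReal.ofReal_rpow_of_pos (by norm_num : (0:ℝ) < 2)]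
  norm_num

lemma eLpNorm_indicator_le_of_bound {α : Type*} [MeasurableSpace α] (μ : Measure α)
    {A : Set α} (hA : MeasurableSet A) {g : α → ℝ} {M : ℝ≥0∞}
    (hb : ∀ x ∈ A, (‖g x‖₊ : ℝ≥0∞) ≤ M) {q : ℝ} (hq : 0 < q) :
    eLpNorm (A.indicator g) (ENNReal.ofReal q) μ ≤ M * (μ A) ^ (1/q) := by
  rw [eLpNorm_eq_lintegral_rpow_enorm_toReal (by simp [hq]) ofReal_ne_top,
    ENNReal.toReal_ofReal hq.le]
  have hpt : ∀ x, (‖A.indicator g x‖₊ : ℝ≥0∞) ^ q ≤ A.indicator (fun _ => M ^ q) x := by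
    intro x
    by_cases hx : x ∈ A
    · rw [Set.indicator_of_mem hx, Set.indicator_of_mem hx]
      exact ENNReal.rpow_le_rpow (hb x hx) hq.le
    · rw [Set.indicator_of_notMem hx, Set.indicator_of_notMem hx]
      simp [ENNReal.zero_rpow_of_pos hq]
  calc (∫⁻ x, (‖A.indicator g x‖₊ : ℝ≥0∞) ^ q ∂μ) ^ (1/q)
      ≤ (∫⁻ x, A.indicator (fun _ => M ^ q) x ∂μ) ^ (1/q) := by
        gcongr with x; exact hpt x
    _ = (M ^ q * μ A) ^ (1/q) := by rw [lintegral_indicator hA, setLIntegral_const]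
    _ = M * (μ A) ^ (1/q) := by
        rw [ENNReal.mul_rpow_of_nonneg _ _ (by positivity), ← ENNReal.rpow_mul,
          mul_one_div, div_self hq.ne', ENNReal.rpow_one]

lemma hardy_pointwise {n : ℕ} (hn : 1 ≤ n) {β : ℝ} (hβn : β < n)
    (f : EuclideanSpace ℝ (Fin n) → ℝ) (k : ℤ) {x : EuclideanSpace ℝ (Fin n)}
    (hx : x ∈ annulus n k) :
    (‖hardyOp n β f x‖₊ : ℝ≥0∞) ≤
      (2:ℝ≥0∞) ^ (((k - 1 : ℤ):ℝ) * (β - n)) *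
        ∑' j : {j : ℤ // j ≤ k}, ∫⁻ t in annulus n (j : ℤ), (‖f t‖₊ : ℝ≥0∞) := by
  rw [hardyOp, nnnorm_mul, ENNReal.coe_mul]
  have h1 : (‖‖x‖ ^ (β - (n:ℝ))‖₊ : ℝ≥0∞) ≤ (2:ℝ≥0∞) ^ (((k - 1 : ℤ):ℝ) * (β - n)) := by
    rw [← enorm_eq_nnnorm, Real.enorm_eq_ofReal (Real.rpow_nonneg (norm_nonneg x) _)]
    have hle : ‖x‖ ^ (β - (n:ℝ)) ≤ ((2:ℝ) ^ (k-1)) ^ (β - (n:ℝ)) :=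
      Real.rpow_le_rpow_of_nonpos (by positivity) hx.1.le (by simp; linarith)
    refine le_trans (ENNReal.ofReal_le_ofReal hle) (le_of_eq ?_)
    rw [show ((2:ℝ)^(k-1)) ^ (β - (n:ℝ)) = (2:ℝ) ^ (((k-1:ℤ):ℝ) * (β - n)) by
        rw [← Real.rpow_intCast 2 (k-1), ← Real.rpow_mul (by norm_num)],
      ← ENNReal.ofReal_rpow_of_pos (by norm_num : (0:ℝ) < 2)]
    norm_num
  have h2 : (‖∫ t in {t : EuclideanSpace ℝ (Fin n) | ‖t‖ < ‖x‖}, f t‖₊ : ℝ≥0∞) ≤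
      ∑' j : {j : ℤ // j ≤ k}, ∫⁻ t in annulus n (j : ℤ), (‖f t‖₊ : ℝ≥0∞) := by
    refine le_trans (enorm_integral_le_lintegral_enorm _) ?_
    refine le_trans (lintegral_mono_set ?_) (lintegral_ball_le hn _ k)
    intro t ht
    exact le_trans (le_of_lt ht) hx.2
  exact mul_le_mul' h1 h2

/-- The constant-exponent version of the key block estimate (3.3) in the proof of
Theorem 3.1:
`‖(H_β f) χ_k‖_{L^{q₂}} ≤ C Σ_{j≤k} 2^{(j−k)n(1−1/q₁)} ‖f χ_j‖_{L^{q₁}}`. -/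
theorem fractionalHardy_block_estimate
    (n : ℕ) (hn : 1 ≤ n) (β q₁ q₂ : ℝ)
    (hβ0 : 0 < β) (hβn : β < n)
    (hq₁ : 1 < q₁) (hq₁' : q₁ < n / β)
    (hq₂ : 1 / q₂ = 1 / q₁ - β / n) :
    ∃ C : ℝ, 0 < C ∧
      ∀ f : EuclideanSpace ℝ (Fin n) → ℝ, LocallyIntegrable f volume →
        ∀ k : ℤ,
          eLpNorm ((annulus n k).indicator (hardyOp n β f)) (ENNReal.ofReal q₂) volume ≤
            ENNReal.ofReal C *
              ∑' j : {j : ℤ // j ≤ k},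
                (2 : ℝ≥0∞) ^ (((((j : ℤ) - k : ℤ)) : ℝ) * ((n : ℝ) * (1 - 1 / q₁))) *
                  eLpNorm ((annulus n j).indicator f) (ENNReal.ofReal q₁) volume := by
  have hn0 : (0:ℝ) < n := by exact_mod_cast Nat.lt_of_lt_of_le Nat.zero_lt_one hn
  have hq₁0 : (0:ℝ) < q₁ := by linarith
  have hβq : β / n < 1 / q₁ := by
    rw [div_lt_div_iff₀ hn0 hq₁0]
    have := (lt_div_iff₀ hβ0).mp hq₁'
    linarith
  have hq₂inv : 0 < 1 / q₂ := by rw [hq₂]; linarith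
  have hq₂0 : (0:ℝ) < q₂ := one_div_pos.mp hq₂inv
  set r : ℝ := 1 - 1/q₁ with hr
  have hr0 : 0 < r := by
    have : 1/q₁ < 1 := by rw [div_lt_one hq₁0]; linarith
    rw [hr]; linarith
  set V := volume (Metric.ball (0 : EuclideanSpace ℝ (Fin n)) 1) with hV
  haveI : Nontrivial (EuclideanSpace ℝ (Fin n)) :=
    Module.nontrivial_of_finrank_pos (R := ℝ) (by simp; omega)
  have hV0 : V ≠ 0 := (Metric.measure_ball_pos volume 0 one_pos).ne'
  have hVtop : V ≠ ∞ := measure_ball_lt_top.ne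
  set Ce : ℝ≥0∞ := (2:ℝ≥0∞) ^ ((n:ℝ) - β) * V ^ (r + 1/q₂) with hCe
  have hCe0 : Ce ≠ 0 := by
    apply mul_ne_zero
    · exact (ENNReal.rpow_pos (by norm_num) (by norm_num)).ne'
    · exact (ENNReal.rpow_pos (pos_iff_ne_zero.mpr hV0) hVtop).ne'
  have hCetop : Ce ≠ ∞ := by
    apply ENNReal.mul_ne_top
    · exact ENNReal.rpow_ne_top_of_nonneg (by linarith) (by norm_num)
    · exact ENNReal.rpow_ne_top_of_nonneg (add_nonneg hr0.le hq₂inv.le) hVtop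
  refine ⟨Ce.toReal, ENNReal.toReal_pos hCe0 hCetop, ?_⟩
  intro f hf k
  rw [ENNReal.ofReal_toReal hCetop, ← ENNReal.tsum_mul_left]
  set N : ℤ → ℝ≥0∞ :=
    fun j => eLpNorm ((annulus n j).indicator f) (ENNReal.ofReal q₁) volume with hN
  set S : ℤ → ℝ≥0∞ := fun j => ∫⁻ t in annulus n j, (‖f t‖₊ : ℝ≥0∞) with hS
  set a : ℝ := ((k - 1 : ℤ):ℝ) * (β - n) with ha
  set X : ℝ≥0∞ := (2:ℝ≥0∞) ^ ((k:ℝ) * n * (1/q₂)) * V ^ (1/q₂) with hX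
  have step1 : eLpNorm ((annulus n k).indicator (hardyOp n β f)) (ENNReal.ofReal q₂) volume ≤
      ((2:ℝ≥0∞) ^ a * ∑' j : {j : ℤ // j ≤ k}, S (j:ℤ)) * (volume (annulus n k)) ^ (1/q₂) :=
    eLpNorm_indicator_le_of_bound volume (measurableSet_annulus n k)
      (fun x hx => hardy_pointwise hn hβn f k hx) hq₂0
  have step2 : (volume (annulus n k)) ^ (1/q₂) ≤ X := by
    rw [hX]
    calc (volume (annulus n k)) ^ (1/q₂)
        ≤ ((2:ℝ≥0∞) ^ ((k:ℝ) * n) * V) ^ (1/q₂) :=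
          ENNReal.rpow_le_rpow (volume_annulus_le k) hq₂inv.le
      _ = (2:ℝ≥0∞) ^ ((k:ℝ) * n * (1/q₂)) * V ^ (1/q₂) := by
          rw [ENNReal.mul_rpow_of_nonneg _ _ hq₂inv.le, ← ENNReal.rpow_mul]
  have step3 : ∀ j : ℤ, S j ≤ N j * ((2:ℝ≥0∞) ^ ((j:ℝ) * n * r) * V ^ r) := by
    intro j
    refine le_trans (holder_annulus hq₁ f hf.aestronglyMeasurable j) ?_
    gcongr
    calc (volume (annulus n j)) ^ (1 - 1/q₁)
        ≤ ((2:ℝ≥0∞) ^ ((j:ℝ) * n) * V) ^ r :=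
          ENNReal.rpow_le_rpow (volume_annulus_le j) hr0.le
      _ = (2:ℝ≥0∞) ^ ((j:ℝ) * n * r) * V ^ r := by
          rw [ENNReal.mul_rpow_of_nonneg _ _ hr0.le, ← ENNReal.rpow_mul]
  calc eLpNorm ((annulus n k).indicator (hardyOp n β f)) (ENNReal.ofReal q₂) volume
      ≤ ((2:ℝ≥0∞) ^ a * ∑' j : {j : ℤ // j ≤ k}, S (j:ℤ)) * X := by
        exact le_trans step1 (mul_le_mul_right step2 _)
    _ ≤ ((2:ℝ≥0∞) ^ a *
          ∑' j : {j : ℤ // j ≤ k}, N (j:ℤ) * ((2:ℝ≥0∞) ^ (((j:ℤ):ℝ) * n * r) * V ^ r)) * X := by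
        gcongr with j
        exact step3 (j:ℤ)
    _ = ∑' j : {j : ℤ // j ≤ k},
          ((2:ℝ≥0∞) ^ a * X) * (N (j:ℤ) * ((2:ℝ≥0∞) ^ (((j:ℤ):ℝ) * n * r) * V ^ r)) := by
        rw [ENNReal.tsum_mul_left]; ring
    _ ≤ ∑' j : {j : ℤ // j ≤ k},
          Ce * ((2 : ℝ≥0∞) ^ (((((j : ℤ) - k : ℤ)) : ℝ) * ((n : ℝ) * (1 - 1 / q₁))) * N (j:ℤ)) := by
        refine ENNReal.tsum_le_tsum fun j => le_of_eq ?_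
        have hq₂' : (n:ℝ) * (1/q₂) = (n:ℝ) * (1/q₁) - β := by
          rw [hq₂]; field_simp
        have hexp : a + ((k:ℝ) * n * (1/q₂) + ((j:ℤ):ℝ) * n * r) =
            ((n:ℝ) - β) + ((((j:ℤ) - k : ℤ)):ℝ) * ((n:ℝ) * (1 - 1/q₁)) := by
          rw [ha, hr]; push_cast
          linear_combination (k:ℝ) * hq₂'
        rw [hX, hCe]
        rw [show (2:ℝ≥0∞) ^ a * ((2:ℝ≥0∞) ^ ((k:ℝ) * n * (1/q₂)) * V ^ (1/q₂)) *
              (N (j:ℤ) * ((2:ℝ≥0∞) ^ (((j:ℤ):ℝ) * n * r) * V ^ r)) =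
            (2:ℝ≥0∞) ^ (a + ((k:ℝ) * n * (1/q₂) + ((j:ℤ):ℝ) * n * r)) * V ^ (r + 1/q₂) *
              N (j:ℤ) by
          rw [ENNReal.rpow_add _ _ two_ne_zero ENNReal.ofNat_ne_top,
            ENNReal.rpow_add _ _ two_ne_zero ENNReal.ofNat_ne_top,
            ENNReal.rpow_add _ _ hV0 hVtop]
          ring]
        rw [hexp, ENNReal.rpow_add _ _ two_ne_zero ENNReal.ofNat_ne_top]
        ring
end

section
/- Let n ≥ 1 and let β₀, β₁ be constants with 0 < β₀ ≤ β₁ < n. Then there exists a constant C > 0 such that for every β ∈ [β₀, β₁], every R > 0, and every x ∈ ℝⁿ with |x| ≤ R, one has ∫_{|y| ≤ R} |x − y|^{β − n} dy ≥ C |x|^{β}. (This is the lower bound (3.2)/(3.7) for the Riesz-type potential of the characteristic function of a ball, uniform in the radius.) -/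
open MeasureTheory ENNReal

/-- The lower bound (3.2)/(3.7): for `0 < β₀ ≤ β ≤ β₁ < n`, uniformly in the radius `R`,
`∫_{|y|≤R} |x−y|^{β−n} dy ≥ C |x|^β` whenever `|x| ≤ R`.  The integrand is interpreted
in `[0,∞]` (so it is `+∞` at `y = x`). -/
theorem riesz_potential_ball_lower_bound
    (n : ℕ) (hn : 1 ≤ n) (β₀ β₁ : ℝ)
    (hβ₀ : 0 < β₀) (hβ₀₁ : β₀ ≤ β₁) (hβ₁ : β₁ < n) :
    ∃ C : ℝ, 0 < C ∧
      ∀ β ∈ Set.Icc β₀ β₁, ∀ R : ℝ, 0 < R →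
        ∀ x : EuclideanSpace ℝ (Fin n), ‖x‖ ≤ R →
          ENNReal.ofReal (C * ‖x‖ ^ β) ≤
            ∫⁻ y in {y : EuclideanSpace ℝ (Fin n) | ‖y‖ ≤ R},
              (ENNReal.ofReal ‖x - y‖) ^ (β - (n : ℝ)) := by
  classical
  set E := EuclideanSpace ℝ (Fin n)
  set v : ℝ := (volume (Metric.ball (0:E) 1)).toReal with hv_def
  have hvol_pos : 0 < volume (Metric.ball (0:E) 1) :=
    Metric.measure_ball_pos _ _ one_pos
  have hvol_ne_top : volume (Metric.ball (0:E) 1) ≠ ⊤ :=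
    (measure_ball_lt_top).ne
  have hv : 0 < v := ENNReal.toReal_pos hvol_pos.ne' hvol_ne_top
  refine ⟨v * (3:ℝ) ^ (β₀ - n) * (4:ℝ) ^ (-β₁), by positivity, ?_⟩
  rintro β ⟨hβl, hβr⟩ R hR x hx
  have hβpos : 0 < β := lt_of_lt_of_le hβ₀ hβl
  have hβn : β - (n:ℝ) ≤ 0 := by
    have : β ≤ (n:ℝ) := le_of_lt (lt_of_le_of_lt hβr hβ₁)
    linarith
  rcases eq_or_lt_of_le (norm_nonneg x) with h0 | hM
  · -- x = 0 case: LHS is 0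
    rw [← h0, Real.zero_rpow hβpos.ne', mul_zero, ENNReal.ofReal_zero]
    exact zero_le
  -- main case
  set M : ℝ := ‖x‖ with hM_def
  set r : ℝ := M / 4 with hr_def
  have hr : 0 < r := by positivity
  set S : Set E := Metric.closedBall ((1/2 : ℝ) • x) r with hS_def
  have hsub : S ⊆ {y : E | ‖y‖ ≤ R} := by
    intro y hy
    simp only [hS_def, Metric.mem_closedBall, dist_eq_norm] at hy
    have h2 : ‖(1/2 : ℝ) • x‖ = M / 2 := by
      rw [norm_smul]; simp [hM_def]; ring
    have : ‖y‖ - ‖(1/2 : ℝ) • x‖ ≤ ‖y - (1/2 : ℝ) • x‖ := norm_sub_norm_le _ _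
    calc ‖y‖ ≤ r + M/2 := by rw [h2] at this; linarith [show ‖y - (1/2:ℝ) • x‖ ≤ r by rw [← dist_eq_norm]; exact hy]
    _ ≤ R := by rw [hr_def]; linarith [hx]
  have hdist : ∀ y ∈ S, ‖x - y‖ ≤ 3 * r := by
    intro y hy
    simp only [hS_def, Metric.mem_closedBall, dist_eq_norm] at hy
    have h2 : ‖x - (1/2 : ℝ) • x‖ = M / 2 := by
      have : x - (1/2 : ℝ) • x = (1/2 : ℝ) • x := by
        rw [sub_eq_iff_eq_add, ← add_smul]; norm_num
      rw [this, norm_smul]; simp [hM_def]; ring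
    calc ‖x - y‖ ≤ ‖x - (1/2:ℝ) • x‖ + ‖(1/2:ℝ) • x - y‖ := norm_sub_le_norm_sub_add_norm_sub _ _ _
      _ = M/2 + ‖y - (1/2:ℝ) • x‖ := by rw [h2, norm_sub_rev]
      _ ≤ M/2 + r := by linarith [show ‖y - (1/2:ℝ) • x‖ ≤ r by rw [← dist_eq_norm]; exact hy]
      _ = 3 * r := by rw [hr_def]; ring
  have key : ∀ y ∈ S, ENNReal.ofReal ((3*r) ^ (β - (n:ℝ))) ≤ (ENNReal.ofReal ‖x - y‖) ^ (β - (n:ℝ)) := by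
    intro y hy
    rw [← ENNReal.ofReal_rpow_of_pos (by positivity)]
    rw [show β - (n:ℝ) = -((n:ℝ) - β) by ring, ENNReal.rpow_neg, ENNReal.rpow_neg]
    exact ENNReal.inv_le_inv.mpr (ENNReal.rpow_le_rpow
      (ENNReal.ofReal_le_ofReal (hdist y hy)) (by linarith))
  have hmeas : Measurable fun y : E => (ENNReal.ofReal ‖x - y‖) ^ (β - (n:ℝ)) := by
    exact ENNReal.continuous_rpow_const.measurable.comp
      (measurable_const.sub measurable_id).norm.ennreal_ofReal
  calc ENNReal.ofReal (v * (3:ℝ) ^ (β₀-n) * (4:ℝ)^(-β₁) * M ^ β)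
      ≤ ENNReal.ofReal ((3*r) ^ (β - (n:ℝ)) * r ^ n * v) := by
        apply ENNReal.ofReal_le_ofReal
        have e1 : (3*r) ^ (β - (n:ℝ)) * r ^ n = 3 ^ (β - (n:ℝ)) * r ^ β := by
          rw [Real.mul_rpow (by norm_num) hr.le, ← Real.rpow_natCast r n, mul_assoc,
            ← Real.rpow_add hr]
          ring_nf
        have e2 : r ^ β = M ^ β * 4 ^ (-β) := by
          rw [hr_def, Real.div_rpow (by positivity) (by norm_num),
            Real.rpow_neg (by norm_num), div_eq_mul_inv]
        rw [e1, e2]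
        have h3 : (3:ℝ) ^ (β₀ - n) ≤ 3 ^ (β - (n:ℝ)) :=
          Real.rpow_le_rpow_of_exponent_le (by norm_num) (by linarith)
        have h4 : (4:ℝ) ^ (-β₁) ≤ 4 ^ (-β) :=
          Real.rpow_le_rpow_of_exponent_le (by norm_num) (by linarith)
        have hMβ : (0:ℝ) ≤ M ^ β := Real.rpow_nonneg hM.le _
        calc v * (3:ℝ) ^ (β₀-n) * (4:ℝ)^(-β₁) * M ^ β
            ≤ v * (3 ^ (β - (n:ℝ))) * (4 ^ (-β)) * M ^ β := by
              apply mul_le_mul_of_nonneg_right _ hMβ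
              apply mul_le_mul (mul_le_mul_of_nonneg_left h3 hv.le) h4 (by positivity) (by positivity)
          _ = 3 ^ (β - (n:ℝ)) * (M ^ β * 4 ^ (-β)) * v := by ring
    _ = ENNReal.ofReal ((3*r) ^ (β - (n:ℝ))) * (ENNReal.ofReal (r ^ n) * volume (Metric.ball (0:E) 1)) := by
        rw [ENNReal.ofReal_mul (by positivity), ENNReal.ofReal_mul (by positivity)]
        rw [hv_def, ENNReal.ofReal_toReal hvol_ne_top, mul_assoc]
    _ = ENNReal.ofReal ((3*r) ^ (β - (n:ℝ))) * volume S := by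
        rw [hS_def, Measure.addHaar_closedBall _ _ hr.le]
        rw [finrank_euclideanSpace_fin, mul_comm (ENNReal.ofReal (r ^ n))]
    _ = ∫⁻ _ in S, ENNReal.ofReal ((3*r) ^ (β - (n:ℝ))) := by
        rw [setLIntegral_const]
    _ ≤ ∫⁻ y in S, (ENNReal.ofReal ‖x - y‖) ^ (β - (n:ℝ)) :=
        setLIntegral_mono hmeas key
    _ ≤ ∫⁻ y in {y : E | ‖y‖ ≤ R}, (ENNReal.ofReal ‖x - y‖) ^ (β - (n:ℝ)) :=
        lintegral_mono_set hsub
end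

section
/- Let λ ≥ 0, 0 < p < ∞, d > 0, and α < λ + d. Then there exists a constant C > 0 (depending only on λ, p, d, α) such that for every sequence (a_j)_{j∈ℤ} of nonnegative reals, sup_{k₀∈ℤ} 2^{−k₀λ} ( Σ_{k=−∞}^{k₀} 2^{kαp} ( Σ_{j=−∞}^{k} 2^{(j−k)d} a_j )^p )^{1/p} ≤ C · sup_{k₀∈ℤ} 2^{−k₀λ} ( Σ_{k=−∞}^{k₀} 2^{kαp} a_k^p )^{1/p}. (This is the discrete summation estimate underlying the proof of Theorem 3.1.) -/
open ENNReal MeasureTheory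


lemma tsum_rpow_le_of_le_one {p : ℝ} (hp0 : 0 < p) (hp1 : p ≤ 1) (f : ℕ → ℝ≥0∞) :
    (∑' i, f i) ^ p ≤ ∑' i, f i ^ p := by
  have hmono : Monotone fun x : ℝ≥0∞ => x ^ p := fun _ _ h => ENNReal.rpow_le_rpow h hp0.le
  rw [ENNReal.tsum_eq_iSup_sum,
    hmono.map_iSup_of_continuousAt (ENNReal.continuous_rpow_const.continuousAt)
      (by simp [ENNReal.zero_rpow_of_pos hp0])]
  refine iSup_le fun s => ?_
  refine le_trans ?_ (ENNReal.sum_le_tsum s)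
  induction s using Finset.cons_induction with
  | empty => simp [ENNReal.zero_rpow_of_pos hp0]
  | cons a s ha ih =>
    rw [Finset.sum_cons, Finset.sum_cons]
    exact le_trans (ENNReal.rpow_add_le_add_rpow _ _ hp0.le hp1) (by gcongr)

lemma tsum_mul_le_Lp_mul_Lq {p q : ℝ} (hpq : p.HolderConjugate q) (f g : ℕ → ℝ≥0∞) :
    ∑' i, f i * g i ≤ (∑' i, f i ^ p) ^ (1/p) * (∑' i, g i ^ q) ^ (1/q) := by
  have h := ENNReal.lintegral_mul_le_Lp_mul_Lq (μ := Measure.count) hpq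
    (measurable_of_countable f).aemeasurable (measurable_of_countable g).aemeasurable
  simpa [MeasureTheory.lintegral_count] using h

lemma my_geom_sum (c : ℝ) : ∑' i : ℕ, (2:ℝ≥0∞) ^ (-(i:ℝ)*c) = (1 - (2:ℝ≥0∞)^(-c))⁻¹ := by
  have : ∀ i : ℕ, (2:ℝ≥0∞) ^ (-(i:ℝ)*c) = ((2:ℝ≥0∞)^(-c))^(i:ℕ) := by
    intro i
    rw [← ENNReal.rpow_natCast ((2:ℝ≥0∞)^(-c)) i, ← ENNReal.rpow_mul]
    ring_nf
  simp_rw [this]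
  exact ENNReal.tsum_geometric _

lemma geom_sum_ne_top {c : ℝ} (hc : 0 < c) : ∑' i : ℕ, (2:ℝ≥0∞) ^ (-(i:ℝ)*c) ≠ ⊤ := by
  rw [my_geom_sum]
  have h1 : (2:ℝ≥0∞)^(-c) < 1 := by
    apply ENNReal.rpow_lt_one_of_one_lt_of_neg (by norm_num) (by linarith)
  simp [ENNReal.inv_ne_top, tsub_eq_zero_iff_le, not_le.mpr h1]

lemma key_step (p b c : ℝ) (hp : 0 < p) (hb : 0 < b) :
    ∃ C₀ : ℝ≥0∞, C₀ ≠ ⊤ ∧ ∀ f : ℕ → ℝ≥0∞,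
      (∑' i : ℕ, (2:ℝ≥0∞)^(-(i:ℝ)*(b+c)) * f i)^p
        ≤ C₀ * ∑' i : ℕ, (2:ℝ≥0∞)^(-(i:ℝ)*c*p) * (f i)^p := by
  rcases le_or_gt p 1 with hp1 | hp1
  · refine ⟨1, one_ne_top, fun f => ?_⟩
    rw [one_mul]
    refine le_trans (tsum_rpow_le_of_le_one hp hp1 _) (ENNReal.tsum_le_tsum fun i => ?_)
    rw [ENNReal.mul_rpow_of_nonneg _ _ hp.le, ← ENNReal.rpow_mul]
    have hi : (0:ℝ) ≤ i := by positivity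
    exact mul_le_mul_left (ENNReal.rpow_le_rpow_of_exponent_le one_le_two (by nlinarith [mul_nonneg (mul_nonneg hi hb.le) hp.le])) _
  · set q := p / (p - 1) with hqdef
    have hpq : p.HolderConjugate q := Real.HolderConjugate.conjExponent hp1
    have hq1 : 1 < q := hpq.symm.lt
    refine ⟨(∑' i : ℕ, (2:ℝ≥0∞)^(-(i:ℝ)*(b*q)))^(p/q),
      ENNReal.rpow_ne_top_of_nonneg (by positivity) (geom_sum_ne_top (by positivity)), fun f => ?_⟩
    have hsplit : ∀ i : ℕ, (2:ℝ≥0∞)^(-(i:ℝ)*(b+c)) * f i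
        = (2:ℝ≥0∞)^(-(i:ℝ)*b) * ((2:ℝ≥0∞)^(-(i:ℝ)*c) * f i) := by
      intro i
      rw [← mul_assoc, ← ENNReal.rpow_add _ _ two_ne_zero ENNReal.ofNat_ne_top]
      congr 1
      ring
    simp_rw [hsplit]
    have h := tsum_mul_le_Lp_mul_Lq hpq.symm (fun i => (2:ℝ≥0∞)^(-(i:ℝ)*b))
      (fun i => (2:ℝ≥0∞)^(-(i:ℝ)*c) * f i)
    have hX : ∀ i : ℕ, ((2:ℝ≥0∞)^(-(i:ℝ)*b))^q = (2:ℝ≥0∞)^(-(i:ℝ)*(b*q)) := by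
      intro i
      rw [← ENNReal.rpow_mul]
      congr 1
      ring
    have hY : ∀ i : ℕ, ((2:ℝ≥0∞)^(-(i:ℝ)*c) * f i)^p
        = (2:ℝ≥0∞)^(-(i:ℝ)*c*p) * (f i)^p := by
      intro i
      rw [ENNReal.mul_rpow_of_nonneg _ _ hp.le, ← ENNReal.rpow_mul]
    simp_rw [hX, hY] at h
    calc (∑' i : ℕ, (2:ℝ≥0∞)^(-(i:ℝ)*b) * ((2:ℝ≥0∞)^(-(i:ℝ)*c) * f i))^p
        ≤ ((∑' i : ℕ, (2:ℝ≥0∞)^(-(i:ℝ)*(b*q)))^(1/q)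
            * (∑' i : ℕ, (2:ℝ≥0∞)^(-(i:ℝ)*c*p) * (f i)^p)^(1/p))^p := by gcongr
      _ = _ := by
          rw [ENNReal.mul_rpow_of_nonneg _ _ hp.le, ← ENNReal.rpow_mul, ← ENNReal.rpow_mul,
            one_div_mul_cancel (by positivity : p ≠ 0), ENNReal.rpow_one,
            show 1/q*p = p/q by ring]

def eShiftNat (k : ℤ) : ℕ ≃ {j : ℤ // j ≤ k} where
  toFun i := ⟨k - i, by omega⟩
  invFun j := (k - j.1).toNat
  left_inv i := by simp
  right_inv j := by
    ext
    have := j.2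
    simp
    omega


/-- The discrete summation estimate underlying the proof of Theorem 3.1: for `λ ≥ 0`,
`0 < p < ∞`, `d > 0` and `α < λ + d`, the Herz–Morrey type quantity of the sequence
`k ↦ Σ_{j≤k} 2^{(j−k)d} a_j` is controlled by that of `(a_k)`, in `[0,∞]`. -/
theorem herzMorrey_discrete_estimate_lower
    (lam p d α : ℝ) (hlam : 0 ≤ lam) (hp : 0 < p) (hd : 0 < d)
    (hα : α < lam + d) :
    ∃ C : ℝ, 0 < C ∧
      ∀ a : ℤ → ℝ, (∀ j, 0 ≤ a j) →
        (⨆ k₀ : ℤ, (2 : ℝ≥0∞) ^ (-(k₀ : ℝ) * lam) *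
          (∑' k : {k : ℤ // k ≤ k₀},
            (2 : ℝ≥0∞) ^ (((k : ℤ) : ℝ) * α * p) *
              (∑' j : {j : ℤ // j ≤ (k : ℤ)},
                (2 : ℝ≥0∞) ^ (((((j : ℤ) - k : ℤ)) : ℝ) * d) *
                  ENNReal.ofReal (a j)) ^ p) ^ (1 / p)) ≤
        ENNReal.ofReal C *
          (⨆ k₀ : ℤ, (2 : ℝ≥0∞) ^ (-(k₀ : ℝ) * lam) *
            (∑' k : {k : ℤ // k ≤ k₀},
              (2 : ℝ≥0∞) ^ (((k : ℤ) : ℝ) * α * p) *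
                ENNReal.ofReal (a k) ^ p) ^ (1 / p)) := by
  have hp' : p ≠ 0 := hp.ne'
  set ε := (lam + d - α)/2 with hεdef
  have hε : 0 < ε := by rw [hεdef]; linarith
  obtain ⟨C₀, hC₀top, hC₀⟩ := key_step p ε (d - ε) hp hε
  rw [show ε + (d - ε) = d by ring] at hC₀
  set c₂ : ℝ≥0∞ := ∑' i : ℕ, (2:ℝ≥0∞)^(-(i:ℝ)*(ε*p)) with hc₂def
  have hc₂top : c₂ ≠ ⊤ := geom_sum_ne_top (by positivity)
  set K : ℝ≥0∞ := (C₀ * c₂)^(1/p) with hKdef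
  have hKtop : K ≠ ⊤ :=
    ENNReal.rpow_ne_top_of_nonneg (by positivity) (ENNReal.mul_ne_top hC₀top hc₂top)
  refine ⟨K.toReal + 1, by positivity, fun a ha => ?_⟩
  have hK_le : K ≤ ENNReal.ofReal (K.toReal + 1) := by
    conv_lhs => rw [← ENNReal.ofReal_toReal hKtop]
    exact ENNReal.ofReal_le_ofReal (by linarith)
  set M : ℝ≥0∞ := ⨆ k₀ : ℤ, (2 : ℝ≥0∞) ^ (-(k₀ : ℝ) * lam) *
            (∑' k : {k : ℤ // k ≤ k₀},
              (2 : ℝ≥0∞) ^ (((k : ℤ) : ℝ) * α * p) *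
                ENNReal.ofReal (a k) ^ p) ^ (1 / p) with hMdef
  -- partial sum bound
  have hP : ∀ K' : ℤ, (∑' k : {k : ℤ // k ≤ K'},
      (2 : ℝ≥0∞) ^ (((k : ℤ) : ℝ) * α * p) * ENNReal.ofReal (a k) ^ p)
        ≤ ((2:ℝ≥0∞)^((K' : ℝ)*lam) * M)^p := by
    intro K'
    set S : ℝ≥0∞ := ∑' k : {k : ℤ // k ≤ K'},
      (2 : ℝ≥0∞) ^ (((k : ℤ) : ℝ) * α * p) * ENNReal.ofReal (a k) ^ p with hSdef
    have h1 : (2:ℝ≥0∞)^(-(K' : ℝ)*lam) * S^(1/p) ≤ M := by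
      rw [hMdef]
      exact le_iSup (fun k₀ : ℤ => (2 : ℝ≥0∞) ^ (-(k₀ : ℝ) * lam) *
            (∑' k : {k : ℤ // k ≤ k₀},
              (2 : ℝ≥0∞) ^ (((k : ℤ) : ℝ) * α * p) *
                ENNReal.ofReal (a k) ^ p) ^ (1 / p)) K'
    have h2 : S^(1/p) ≤ (2:ℝ≥0∞)^((K' : ℝ)*lam) * M := by
      calc S^(1/p) = (2:ℝ≥0∞)^((K' : ℝ)*lam) * ((2:ℝ≥0∞)^(-(K' : ℝ)*lam) * S^(1/p)) := by
            rw [← mul_assoc, ← ENNReal.rpow_add _ _ two_ne_zero ENNReal.ofNat_ne_top,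
              show (K' : ℝ)*lam + -(K' : ℝ)*lam = 0 by ring, ENNReal.rpow_zero, one_mul]
        _ ≤ _ := mul_le_mul_right h1 _
    calc S = (S^(1/p))^p := by
          rw [← ENNReal.rpow_mul, one_div_mul_cancel hp', ENNReal.rpow_one]
      _ ≤ ((2:ℝ≥0∞)^((K' : ℝ)*lam) * M)^p := ENNReal.rpow_le_rpow h2 hp.le
  -- step 1 : inner convolution bound, per k
  have hStep1 : ∀ k : ℤ,
      (∑' j : {j : ℤ // j ≤ k},
        (2 : ℝ≥0∞) ^ (((((j : ℤ) - k : ℤ)) : ℝ) * d) * ENNReal.ofReal (a j)) ^ p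
      ≤ C₀ * ∑' i : ℕ, (2:ℝ≥0∞)^(-(i:ℝ)*(d-ε)*p) * (ENNReal.ofReal (a (k - i)))^p := by
    intro k
    have hA : (∑' j : {j : ℤ // j ≤ k},
        (2 : ℝ≥0∞) ^ (((((j : ℤ) - k : ℤ)) : ℝ) * d) * ENNReal.ofReal (a j))
        = ∑' i : ℕ, (2:ℝ≥0∞)^(-(i:ℝ)*d) * ENNReal.ofReal (a (k - i)) := by
      rw [← Equiv.tsum_eq (eShiftNat k)
        (fun j : {j : ℤ // j ≤ k} => (2 : ℝ≥0∞) ^ (((((j : ℤ) - k : ℤ)) : ℝ) * d)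
          * ENNReal.ofReal (a j))]
      apply tsum_congr
      intro i
      simp only [eShiftNat, Equiv.coe_fn_mk]
      congr 2
      push_cast
      ring
    rw [hA]
    exact hC₀ _
  refine le_trans (iSup_le fun k₀ => ?_) (mul_le_mul_left hK_le M)
  -- main chain for fixed k₀
  have hT : (∑' k : {k : ℤ // k ≤ k₀},
      (2 : ℝ≥0∞) ^ (((k : ℤ) : ℝ) * α * p) *
        (∑' j : {j : ℤ // j ≤ (k : ℤ)},
          (2 : ℝ≥0∞) ^ (((((j : ℤ) - k : ℤ)) : ℝ) * d) *
            ENNReal.ofReal (a j)) ^ p)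
      ≤ (C₀ * c₂) * ((2:ℝ≥0∞)^((k₀:ℝ)*lam) * M)^p := by
    calc (∑' k : {k : ℤ // k ≤ k₀},
        (2 : ℝ≥0∞) ^ (((k : ℤ) : ℝ) * α * p) *
          (∑' j : {j : ℤ // j ≤ (k : ℤ)},
            (2 : ℝ≥0∞) ^ (((((j : ℤ) - k : ℤ)) : ℝ) * d) *
              ENNReal.ofReal (a j)) ^ p)
        ≤ ∑' k : {k : ℤ // k ≤ k₀},
            (2 : ℝ≥0∞) ^ (((k : ℤ) : ℝ) * α * p) *
              (C₀ * ∑' i : ℕ, (2:ℝ≥0∞)^(-(i:ℝ)*(d-ε)*p)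
                * (ENNReal.ofReal (a ((k : ℤ) - i)))^p) :=
          ENNReal.tsum_le_tsum fun k => mul_le_mul_right (hStep1 k) _
      _ = C₀ * ∑' k : {k : ℤ // k ≤ k₀}, ∑' i : ℕ,
            (2 : ℝ≥0∞) ^ (((k : ℤ) : ℝ) * α * p) *
              ((2:ℝ≥0∞)^(-(i:ℝ)*(d-ε)*p) * (ENNReal.ofReal (a ((k : ℤ) - i)))^p) := by
          rw [← ENNReal.tsum_mul_left]
          apply tsum_congr
          intro k
          rw [← ENNReal.tsum_mul_left, ← ENNReal.tsum_mul_left, ← ENNReal.tsum_mul_left]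
          apply tsum_congr
          intro i
          ring
      _ = C₀ * ∑' i : ℕ, ∑' k : {k : ℤ // k ≤ k₀},
            (2 : ℝ≥0∞) ^ (((k : ℤ) : ℝ) * α * p) *
              ((2:ℝ≥0∞)^(-(i:ℝ)*(d-ε)*p) * (ENNReal.ofReal (a ((k : ℤ) - i)))^p) := by
          rw [ENNReal.tsum_comm]
      _ ≤ C₀ * ∑' i : ℕ, (2:ℝ≥0∞)^(-(i:ℝ)*(d-ε)*p) * ((2:ℝ≥0∞)^((i:ℝ)*α*p) *
            ((2:ℝ≥0∞)^(((k₀ - i : ℤ) : ℝ)*lam) * M)^p) := by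
          gcongr with i
          -- fixed i : bound the inner k-sum
          have e1 : (∑' k : {k : ℤ // k ≤ k₀},
              (2 : ℝ≥0∞) ^ (((k : ℤ) : ℝ) * α * p) *
                ((2:ℝ≥0∞)^(-(i:ℝ)*(d-ε)*p) * (ENNReal.ofReal (a ((k : ℤ) - i)))^p))
              = (2:ℝ≥0∞)^(-(i:ℝ)*(d-ε)*p) * ((2:ℝ≥0∞)^((i:ℝ)*α*p) *
                  ∑' m : {m : ℤ // m ≤ k₀ - i},
                    (2 : ℝ≥0∞) ^ (((m : ℤ) : ℝ) * α * p) * ENNReal.ofReal (a m) ^ p) := by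
            rw [← Equiv.tsum_eq (eShiftNat k₀) (fun k : {k : ℤ // k ≤ k₀} =>
              (2 : ℝ≥0∞) ^ (((k : ℤ) : ℝ) * α * p) *
                ((2:ℝ≥0∞)^(-(i:ℝ)*(d-ε)*p) * (ENNReal.ofReal (a ((k : ℤ) - i)))^p)),
              ← Equiv.tsum_eq (eShiftNat (k₀ - i)) (fun m : {m : ℤ // m ≤ k₀ - i} =>
              (2 : ℝ≥0∞) ^ (((m : ℤ) : ℝ) * α * p) * ENNReal.ofReal (a m) ^ p),
              ← ENNReal.tsum_mul_left, ← ENNReal.tsum_mul_left]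
            apply tsum_congr
            intro n
            simp only [eShiftNat, Equiv.coe_fn_mk]
            rw [show k₀ - (n:ℤ) - (i:ℤ) = k₀ - (i:ℤ) - (n:ℤ) by ring,
              show ((2:ℝ≥0∞) ^ (((k₀ - (n:ℤ) : ℤ) : ℝ) * α * p))
                = (2:ℝ≥0∞)^((i:ℝ)*α*p) * (2:ℝ≥0∞) ^ (((k₀ - (i:ℤ) - (n:ℤ) : ℤ) : ℝ) * α * p) by
                  rw [← ENNReal.rpow_add _ _ two_ne_zero ENNReal.ofNat_ne_top]
                  congr 1
                  push_cast
                  ring]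
            ring
          rw [e1]
          exact mul_le_mul_right (mul_le_mul_right (hP (k₀ - i)) _) _
      _ = (C₀ * c₂) * ((2:ℝ≥0∞)^((k₀:ℝ)*lam) * M)^p := by
          rw [mul_assoc, ← ENNReal.tsum_mul_right]
          congr 1
          apply tsum_congr
          intro i
          rw [ENNReal.mul_rpow_of_nonneg _ _ hp.le, ENNReal.mul_rpow_of_nonneg _ _ hp.le,
            ← ENNReal.rpow_mul, ← ENNReal.rpow_mul]
          rw [show ((2:ℝ≥0∞)^(-(i:ℝ)*(d-ε)*p) * ((2:ℝ≥0∞)^((i:ℝ)*α*p) *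
              ((2:ℝ≥0∞)^(((k₀ - i : ℤ) : ℝ)*lam*p) * M^p)))
            = ((2:ℝ≥0∞)^(-(i:ℝ)*(d-ε)*p) * (2:ℝ≥0∞)^((i:ℝ)*α*p) *
              (2:ℝ≥0∞)^(((k₀ - i : ℤ) : ℝ)*lam*p)) * M^p by ring,
            ← ENNReal.rpow_add _ _ two_ne_zero ENNReal.ofNat_ne_top,
            ← ENNReal.rpow_add _ _ two_ne_zero ENNReal.ofNat_ne_top,
            show (-(i:ℝ)*(d-ε)*p + (i:ℝ)*α*p + ((k₀ - i : ℤ) : ℝ)*lam*p)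
              = -(i:ℝ)*(ε*p) + (k₀:ℝ)*lam*p by push_cast; rw [hεdef]; ring,
            ENNReal.rpow_add _ _ two_ne_zero ENNReal.ofNat_ne_top]
          ring
  -- conclude for k₀
  calc (2 : ℝ≥0∞) ^ (-(k₀ : ℝ) * lam) *
        (∑' k : {k : ℤ // k ≤ k₀},
          (2 : ℝ≥0∞) ^ (((k : ℤ) : ℝ) * α * p) *
            (∑' j : {j : ℤ // j ≤ (k : ℤ)},
              (2 : ℝ≥0∞) ^ (((((j : ℤ) - k : ℤ)) : ℝ) * d) *
                ENNReal.ofReal (a j)) ^ p) ^ (1 / p)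
      ≤ (2 : ℝ≥0∞) ^ (-(k₀ : ℝ) * lam) *
          ((C₀ * c₂) * ((2:ℝ≥0∞)^((k₀:ℝ)*lam) * M)^p) ^ (1/p) :=
        mul_le_mul_right (ENNReal.rpow_le_rpow hT (by positivity)) _
    _ = K * M := by
        rw [ENNReal.mul_rpow_of_nonneg _ _ (by positivity), ← ENNReal.rpow_mul,
          mul_one_div_cancel hp', ENNReal.rpow_one, ← hKdef,
          show ((2:ℝ≥0∞) ^ (-(k₀ : ℝ) * lam) * (K * ((2:ℝ≥0∞)^((k₀:ℝ)*lam) * M)))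
            = ((2:ℝ≥0∞) ^ (-(k₀ : ℝ) * lam) * (2:ℝ≥0∞)^((k₀:ℝ)*lam)) * (K * M) by ring,
          ← ENNReal.rpow_add _ _ two_ne_zero ENNReal.ofNat_ne_top,
          show -(k₀ : ℝ) * lam + (k₀:ℝ)*lam = 0 by ring, ENNReal.rpow_zero, one_mul]
end

section
/- Let λ ≥ 0, 0 < p < ∞, d > 0, and α > λ − d. Then there exists a constant C > 0 (depending only on λ, p, d, α) such that for every sequence (a_j)_{j∈ℤ} of nonnegative reals, sup_{k₀∈ℤ} 2^{−k₀λ} ( Σ_{k=−∞}^{k₀} 2^{kαp} ( Σ_{j=k+1}^{∞} 2^{(k−j)d} a_j )^p )^{1/p} ≤ C · sup_{k₀∈ℤ} 2^{−k₀λ} ( Σ_{k=−∞}^{k₀} 2^{kαp} a_k^p )^{1/p}. (This is the discrete summation estimate underlying the proof of Theorem 3.2.) -/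
open ENNReal NNReal MeasureTheory

namespace HMaux

noncomputable def e2 (x : ℝ) : ℝ≥0∞ := (2 : ℝ≥0∞) ^ x

lemma e2_def (x : ℝ) : (2 : ℝ≥0∞) ^ x = e2 x := rfl

lemma e2_ne_top (x : ℝ) : e2 x ≠ ⊤ := by
  simp only [e2, ne_eq, ENNReal.rpow_eq_top_iff]
  norm_num

lemma e2_ne_zero (x : ℝ) : e2 x ≠ 0 :=
  (ENNReal.rpow_pos (by norm_num) (by norm_num)).ne'

lemma e2_add (x y : ℝ) : e2 (x + y) = e2 x * e2 y :=
  ENNReal.rpow_add x y (by norm_num) (by norm_num)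

lemma e2_rpow (x y : ℝ) : e2 x ^ y = e2 (x * y) :=
  (ENNReal.rpow_mul 2 x y).symm

lemma e2_mono {x y : ℝ} (h : x ≤ y) : e2 x ≤ e2 y :=
  ENNReal.rpow_le_rpow_of_exponent_le one_le_two h

lemma e2_zero : e2 0 = 1 := ENNReal.rpow_zero

lemma e2_mul_e2_neg (x : ℝ) : e2 x * e2 (-x) = 1 := by
  rw [← e2_add]; simp [e2_zero]

/-- the geometric constant -/
noncomputable def gc (θ : ℝ) : ℝ≥0∞ := (1 - e2 (-θ))⁻¹

lemma gc_ne_top {θ : ℝ} (hθ : 0 < θ) : gc θ ≠ ⊤ := by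
  have h1 : e2 (-θ) < 1 :=
    ENNReal.rpow_lt_one_of_one_lt_of_neg one_lt_two (by linarith)
  simp only [gc, ENNReal.inv_ne_top]
  exact (tsub_pos_of_lt h1).ne'

lemma tsum_e2_nat (θ : ℝ) : ∑' m : ℕ, e2 (-(m : ℝ) * θ) = gc θ := by
  have h : ∀ m : ℕ, e2 (-(m : ℝ) * θ) = e2 (-θ) ^ m := by
    intro m
    rw [← ENNReal.rpow_natCast (e2 (-θ)) m, e2_rpow]
    ring_nf
  simp_rw [h]
  exact ENNReal.tsum_geometric _

def equivLe (n : ℤ) : ℕ ≃ {k : ℤ // k ≤ n} where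
  toFun := fun m => ⟨n - m, by omega⟩
  invFun := fun k => (n - (k : ℤ)).toNat
  left_inv := fun m => by simp
  right_inv := fun k => by
    ext
    have := k.2
    simp
    omega

@[simp] lemma equivLe_apply (n : ℤ) (m : ℕ) : ((equivLe n m : {k : ℤ // k ≤ n}) : ℤ) = n - m := rfl

def equivGe (n : ℤ) : ℕ ≃ {j : ℤ // n + 1 ≤ j} where
  toFun := fun m => ⟨n + 1 + m, by omega⟩
  invFun := fun j => ((j : ℤ) - (n + 1)).toNat
  left_inv := fun m => by simp
  right_inv := fun j => by
    ext
    have := j.2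
    simp
    omega

@[simp] lemma equivGe_apply (n : ℤ) (m : ℕ) : ((equivGe n m : {j : ℤ // n + 1 ≤ j}) : ℤ) = n + 1 + m := rfl

lemma geom_le (θ : ℝ) (n : ℤ) :
    ∑' k : {k : ℤ // k ≤ n}, e2 (((k : ℤ) : ℝ) * θ) = e2 ((n : ℝ) * θ) * gc θ := by
  rw [← (equivLe n).tsum_eq]
  have key : ∀ m : ℕ, e2 ((((equivLe n m : {k : ℤ // k ≤ n}) : ℤ) : ℝ) * θ)
      = e2 ((n : ℝ) * θ) * e2 (-(m : ℝ) * θ) := by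
    intro m
    rw [equivLe_apply, ← e2_add]
    push_cast
    ring_nf
  calc ∑' m : ℕ, e2 ((((equivLe n m : {k : ℤ // k ≤ n}) : ℤ) : ℝ) * θ)
      = ∑' m : ℕ, e2 ((n : ℝ) * θ) * e2 (-(m : ℝ) * θ) := tsum_congr key
    _ = e2 ((n : ℝ) * θ) * gc θ := by rw [ENNReal.tsum_mul_left, tsum_e2_nat]

lemma geom_ge (θ : ℝ) (n : ℤ) :
    ∑' j : {j : ℤ // n + 1 ≤ j}, e2 (-((j : ℤ) : ℝ) * θ) =
      e2 (-((n : ℝ) + 1) * θ) * gc θ := by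
  rw [← (equivGe n).tsum_eq]
  calc ∑' m : ℕ, e2 (-(((equivGe n m : {j : ℤ // n + 1 ≤ j}) : ℤ) : ℝ) * θ)
      = ∑' m : ℕ, e2 (-((n : ℝ) + 1) * θ) * e2 (-(m : ℝ) * θ) := by
        refine tsum_congr fun m => ?_
        rw [equivGe_apply, ← e2_add]
        push_cast
        ring_nf
    _ = e2 (-((n : ℝ) + 1) * θ) * gc θ := by rw [ENNReal.tsum_mul_left, tsum_e2_nat]

lemma tsum_if {P : ℤ → Prop} [DecidablePred P] (f : ℤ → ℝ≥0∞) :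
    ∑' k : {k : ℤ // P k}, f (k : ℤ) = ∑' k : ℤ, if P k then f k else 0 := by
  refine (tsum_subtype (setOf P) f).trans ?_
  exact tsum_congr fun k => by unfold Set.indicator; congr

lemma rpow_tsum_le {ι : Type*} (g : ι → ℝ≥0∞) {p : ℝ} (hp0 : 0 < p) (hp1 : p ≤ 1) :
    (∑' i, g i) ^ p ≤ ∑' i, g i ^ p := by
  have hfin : ∀ s : Finset ι, (∑ i ∈ s, g i) ^ p ≤ ∑ i ∈ s, g i ^ p := by
    intro s
    classical
    induction s using Finset.induction with
    | empty => simp [ENNReal.zero_rpow_of_pos hp0]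
    | @insert a s ha ih =>
        rw [Finset.sum_insert ha, Finset.sum_insert ha]
        exact le_trans (ENNReal.rpow_add_le_add_rpow _ _ hp0.le hp1) (by gcongr)
  have h2 : (∑' i, g i) ≤ (∑' i, g i ^ p) ^ (1 / p) := by
    rw [ENNReal.tsum_eq_iSup_sum]
    refine iSup_le fun s => ?_
    have h3 : (∑ i ∈ s, g i) ^ p ≤ ∑' i, g i ^ p :=
      le_trans (hfin s) (ENNReal.sum_le_tsum s)
    calc ∑ i ∈ s, g i = ((∑ i ∈ s, g i) ^ p) ^ (1 / p) := by
          rw [← ENNReal.rpow_mul, mul_one_div, div_self hp0.ne', ENNReal.rpow_one]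
      _ ≤ (∑' i, g i ^ p) ^ (1 / p) := ENNReal.rpow_le_rpow h3 (by positivity)
  calc (∑' i, g i) ^ p ≤ ((∑' i, g i ^ p) ^ (1 / p)) ^ p :=
        ENNReal.rpow_le_rpow h2 hp0.le
    _ = ∑' i, g i ^ p := by
        rw [← ENNReal.rpow_mul, one_div, inv_mul_cancel₀ hp0.ne', ENNReal.rpow_one]


lemma step1 {p ε dd : ℝ} (hp : 0 < p) (hε : 0 < ε) :
    ∃ C1 : ℝ≥0∞, C1 ≠ ⊤ ∧ ∀ (f : ℤ → ℝ≥0∞) (k : ℤ),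
      (∑' j : {j : ℤ // k + 1 ≤ j}, e2 (((k : ℝ) - ((j : ℤ) : ℝ)) * (dd + ε)) * f j) ^ p ≤
        C1 * ∑' j : {j : ℤ // k + 1 ≤ j},
          e2 (((k : ℝ) - ((j : ℤ) : ℝ)) * dd * p) * (f j) ^ p := by
  rcases le_or_gt p 1 with hp1 | hp1
  · refine ⟨1, one_ne_top, fun f k => ?_⟩
    rw [one_mul]
    refine le_trans (rpow_tsum_le _ hp hp1) (ENNReal.tsum_le_tsum fun j => ?_)
    rw [ENNReal.mul_rpow_of_nonneg _ _ hp.le, e2_rpow]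
    have hkj : (k : ℝ) - ((j : ℤ) : ℝ) ≤ 0 := by
      have := j.2
      have : (k : ℝ) + 1 ≤ ((j : ℤ) : ℝ) := by exact_mod_cast this
      linarith
    have hexp : ((k : ℝ) - ((j : ℤ) : ℝ)) * (dd + ε) * p ≤ ((k : ℝ) - ((j : ℤ) : ℝ)) * dd * p := by
      have h5 : ((k : ℝ) - ((j : ℤ) : ℝ)) * (ε * p) ≤ 0 :=
        mul_nonpos_of_nonpos_of_nonneg hkj (mul_nonneg hε.le hp.le)
      nlinarith [h5]
    exact mul_le_mul' (e2_mono hexp) le_rfl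
  · have hpq : p.HolderConjugate (p.conjExponent) := Real.HolderConjugate.conjExponent hp1
    set q := p.conjExponent with hq
    have hq0 : 0 < q := hpq.symm.pos
    refine ⟨(e2 (-(ε * q)) * gc (ε * q)) ^ (p / q),
      ENNReal.rpow_ne_top_of_nonneg (by positivity)
        (ENNReal.mul_ne_top (e2_ne_top _) (gc_ne_top (by positivity))), fun f k => ?_⟩
    set G : {j : ℤ // k + 1 ≤ j} → ℝ≥0∞ := fun j => e2 (((k : ℝ) - ((j : ℤ) : ℝ)) * ε) with hG
    set H : {j : ℤ // k + 1 ≤ j} → ℝ≥0∞ :=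
      fun j => e2 (((k : ℝ) - ((j : ℤ) : ℝ)) * dd) * f j with hH
    have hsplit : ∀ j : {j : ℤ // k + 1 ≤ j},
        e2 (((k : ℝ) - ((j : ℤ) : ℝ)) * (dd + ε)) * f j = G j * H j := by
      intro j
      rw [hG, hH, ← mul_assoc, ← e2_add]
      ring_nf
    have holder : (∑' j, G j * H j) ≤
        (∑' j, G j ^ q) ^ (1 / q) * (∑' j, H j ^ p) ^ (1 / p) := by
      rw [← lintegral_count, ← lintegral_count (fun j => G j ^ q),
        ← lintegral_count (fun j => H j ^ p)]
      exact ENNReal.lintegral_mul_le_Lp_mul_Lq _ hpq.symm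
        (measurable_of_countable _).aemeasurable (measurable_of_countable _).aemeasurable
    have hGq : (∑' j, G j ^ q) = e2 (-(ε * q)) * gc (ε * q) := by
      have : ∀ j : {j : ℤ // k + 1 ≤ j},
          G j ^ q = e2 ((k : ℝ) * (ε * q)) * e2 (-((j : ℤ) : ℝ) * (ε * q)) := by
        intro j
        rw [hG, e2_rpow, ← e2_add]
        ring_nf
      calc (∑' j, G j ^ q)
          = ∑' j : {j : ℤ // k + 1 ≤ j}, e2 ((k : ℝ) * (ε * q)) * e2 (-((j : ℤ) : ℝ) * (ε * q)) :=
            tsum_congr this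
        _ = e2 ((k : ℝ) * (ε * q)) * (e2 (-((k : ℝ) + 1) * (ε * q)) * gc (ε * q)) := by
            rw [ENNReal.tsum_mul_left, geom_ge]
        _ = e2 (-(ε * q)) * gc (ε * q) := by
            rw [← mul_assoc, ← e2_add]
            ring_nf
    calc (∑' j : {j : ℤ // k + 1 ≤ j}, e2 (((k : ℝ) - ((j : ℤ) : ℝ)) * (dd + ε)) * f j) ^ p
        = (∑' j, G j * H j) ^ p := by rw [tsum_congr hsplit]
      _ ≤ ((∑' j, G j ^ q) ^ (1 / q) * (∑' j, H j ^ p) ^ (1 / p)) ^ p :=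
          ENNReal.rpow_le_rpow holder hp.le
      _ = ((∑' j, G j ^ q) ^ (1 / q)) ^ p * ((∑' j, H j ^ p) ^ (1 / p)) ^ p := by
          rw [ENNReal.mul_rpow_of_nonneg _ _ hp.le]
      _ = (e2 (-(ε * q)) * gc (ε * q)) ^ (p / q) * ∑' j, H j ^ p := by
          rw [hGq, ← ENNReal.rpow_mul, ← ENNReal.rpow_mul, one_div, one_div,
            inv_mul_cancel₀ hp.ne', ENNReal.rpow_one]
          congr 1
          rw [inv_mul_eq_div]
      _ = (e2 (-(ε * q)) * gc (ε * q)) ^ (p / q) *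
            ∑' j : {j : ℤ // k + 1 ≤ j}, e2 (((k : ℝ) - ((j : ℤ) : ℝ)) * dd * p) * (f j) ^ p := by
          congr 1
          refine tsum_congr fun j => ?_
          rw [hH, ENNReal.mul_rpow_of_nonneg _ _ hp.le, e2_rpow]

end HMaux

open HMaux in
/-- The discrete summation estimate underlying the proof of Theorem 3.2: for `λ ≥ 0`,
`0 < p < ∞`, `d > 0` and `α > λ − d`, the Herz–Morrey type quantity of the sequence
`k ↦ Σ_{j≥k+1} 2^{(k−j)d} a_j` is controlled by that of `(a_k)`, in `[0,∞]`. -/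
theorem herzMorrey_discrete_estimate_upper
    (lam p d α : ℝ) (hlam : 0 ≤ lam) (hp : 0 < p) (hd : 0 < d)
    (hα : lam - d < α) :
    ∃ C : ℝ, 0 < C ∧
      ∀ a : ℤ → ℝ, (∀ j, 0 ≤ a j) →
        (⨆ k₀ : ℤ, (2 : ℝ≥0∞) ^ (-(k₀ : ℝ) * lam) *
          (∑' k : {k : ℤ // k ≤ k₀},
            (2 : ℝ≥0∞) ^ (((k : ℤ) : ℝ) * α * p) *
              (∑' j : {j : ℤ // (k : ℤ) + 1 ≤ j},
                (2 : ℝ≥0∞) ^ ((((k : ℤ) - (j : ℤ) : ℤ) : ℝ) * d) *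
                  ENNReal.ofReal (a j)) ^ p) ^ (1 / p)) ≤
        ENNReal.ofReal C *
          (⨆ k₀ : ℤ, (2 : ℝ≥0∞) ^ (-(k₀ : ℝ) * lam) *
            (∑' k : {k : ℤ // k ≤ k₀},
              (2 : ℝ≥0∞) ^ (((k : ℤ) : ℝ) * α * p) *
                ENNReal.ofReal (a k) ^ p) ^ (1 / p)) := by
  classical
  set ε := (α - lam + d) / 2 with hεdef
  have hε : 0 < ε := by rw [hεdef]; linarith
  set d' := d - ε with hd'def
  have hdd : d = d' + ε := by rw [hd'def]; ring
  have hαd' : 0 < α + d' := by rw [hd'def, hεdef]; linarith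
  set β := (α + d') * p with hβdef
  have hβ : 0 < β := mul_pos hαd' hp
  have hεp : 0 < ε * p := mul_pos hε hp
  have hlbp : lam * p = β - ε * p := by rw [hβdef, hd'def, hεdef]; ring
  obtain ⟨C1, hC1top, hC1⟩ := HMaux.step1 (dd := d') hp hε
  set c := HMaux.gc β with hc
  set c' := HMaux.gc (ε * p) with hc'
  set K0 : ℝ≥0∞ := C1 * (c * e2 (-β) + c * c' * e2 (-(ε * p))) with hK0
  have hK0top : K0 ≠ ⊤ := by
    refine ENNReal.mul_ne_top hC1top (ENNReal.add_ne_top.mpr ⟨?_, ?_⟩)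
    · exact ENNReal.mul_ne_top (gc_ne_top hβ) (e2_ne_top _)
    · exact ENNReal.mul_ne_top
        (ENNReal.mul_ne_top (gc_ne_top hβ) (gc_ne_top hεp)) (e2_ne_top _)
  set K := K0 ^ (1 / p) with hKdef
  have hKtop : K ≠ ⊤ := ENNReal.rpow_ne_top_of_nonneg (by positivity) hK0top
  refine ⟨K.toReal + 1, by positivity, fun a ha => ?_⟩
  simp only [e2_def]
  set M := ⨆ k₀ : ℤ, e2 (-(k₀ : ℝ) * lam) *
      (∑' k : {k : ℤ // k ≤ k₀},
        e2 (((k : ℤ) : ℝ) * α * p) * ENNReal.ofReal (a k) ^ p) ^ (1 / p) with hM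
  have hKC : K ≤ ENNReal.ofReal (K.toReal + 1) :=
    calc K = ENNReal.ofReal K.toReal := (ENNReal.ofReal_toReal hKtop).symm
      _ ≤ _ := ENNReal.ofReal_le_ofReal (by linarith)
  -- the two consequences of the definition of M
  have hsum : ∀ n : ℤ,
      (∑' k : {k : ℤ // k ≤ n}, e2 (((k : ℤ) : ℝ) * α * p) * ENNReal.ofReal (a k) ^ p)
        ≤ e2 ((n : ℝ) * lam * p) * M ^ p := by
    intro n
    have h0 : e2 (-(n : ℝ) * lam) *
        (∑' k : {k : ℤ // k ≤ n},
          e2 (((k : ℤ) : ℝ) * α * p) * ENNReal.ofReal (a k) ^ p) ^ (1 / p) ≤ M := by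
      rw [hM]
      exact le_iSup (fun k₀ : ℤ => e2 (-(k₀ : ℝ) * lam) *
        (∑' k : {k : ℤ // k ≤ k₀},
          e2 (((k : ℤ) : ℝ) * α * p) * ENNReal.ofReal (a k) ^ p) ^ (1 / p)) n
    have h1 : (∑' k : {k : ℤ // k ≤ n},
        e2 (((k : ℤ) : ℝ) * α * p) * ENNReal.ofReal (a k) ^ p) ^ (1 / p)
          ≤ e2 ((n : ℝ) * lam) * M := by
      have h2 := mul_le_mul_right h0 (e2 ((n : ℝ) * lam))
      rwa [← mul_assoc, ← e2_add, show (n : ℝ) * lam + -(n : ℝ) * lam = 0 by ring,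
        e2_zero, one_mul] at h2
    have h2 := ENNReal.rpow_le_rpow h1 hp.le
    rwa [← ENNReal.rpow_mul, one_div, inv_mul_cancel₀ hp.ne', ENNReal.rpow_one,
      ENNReal.mul_rpow_of_nonneg _ _ hp.le, e2_rpow] at h2
  have hkey : ∀ j : ℤ, ENNReal.ofReal (a j) ≤ e2 ((j : ℝ) * (lam - α)) * M := by
    intro j
    have hterm : e2 ((j : ℝ) * α * p) * ENNReal.ofReal (a j) ^ p ≤
        ∑' k : {k : ℤ // k ≤ j}, e2 (((k : ℤ) : ℝ) * α * p) * ENNReal.ofReal (a k) ^ p :=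
      ENNReal.le_tsum (⟨j, le_refl j⟩ : {k : ℤ // k ≤ j})
    have h2 : e2 ((j : ℝ) * α * p) * ENNReal.ofReal (a j) ^ p ≤
        e2 ((j : ℝ) * lam * p) * M ^ p := hterm.trans (hsum j)
    have h3 : ENNReal.ofReal (a j) ^ p ≤ e2 ((j : ℝ) * (lam - α) * p) * M ^ p := by
      have h4 := mul_le_mul_right h2 (e2 (-((j : ℝ) * α * p)))
      rw [← mul_assoc, ← e2_add, show -((j : ℝ) * α * p) + (j : ℝ) * α * p = 0 by ring,
        e2_zero, one_mul, ← mul_assoc, ← e2_add,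
        show -((j : ℝ) * α * p) + (j : ℝ) * lam * p = (j : ℝ) * (lam - α) * p by ring] at h4
      exact h4
    have h5 := ENNReal.rpow_le_rpow h3 (by positivity : (0:ℝ) ≤ 1 / p)
    rwa [ENNReal.mul_rpow_of_nonneg _ _ (by positivity), e2_rpow,
      ← ENNReal.rpow_mul, ← ENNReal.rpow_mul,
      show p * (1 / p) = 1 by field_simp,
      show (j : ℝ) * (lam - α) * p * (1 / p) = (j : ℝ) * (lam - α) by field_simp,
      ENNReal.rpow_one, ENNReal.rpow_one] at h5
  refine le_trans (iSup_le fun k₀ => ?_) (mul_le_mul_left hKC M)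
  -- fixed k₀ : bound the inner expression by K * M
  set U : ℤ → ℝ≥0∞ := fun k => ∑' j : {j : ℤ // k + 1 ≤ j},
    e2 (((k : ℝ) - ((j : ℤ) : ℝ)) * d' * p) * ENNReal.ofReal (a j) ^ p with hU
  have hstep : ∀ k : {k : ℤ // k ≤ k₀},
      e2 (((k : ℤ) : ℝ) * α * p) *
        (∑' j : {j : ℤ // (k : ℤ) + 1 ≤ j},
          e2 (((((k : ℤ) - (j : ℤ) : ℤ)) : ℝ) * d) * ENNReal.ofReal (a j)) ^ p
        ≤ C1 * (e2 (((k : ℤ) : ℝ) * α * p) * U (k : ℤ)) := by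
    intro k
    have h1 := hC1 (fun j => ENNReal.ofReal (a j)) (k : ℤ)
    have heq : (∑' j : {j : ℤ // (k : ℤ) + 1 ≤ j},
        e2 (((((k : ℤ) - (j : ℤ) : ℤ)) : ℝ) * d) * ENNReal.ofReal (a j))
        = ∑' j : {j : ℤ // (k : ℤ) + 1 ≤ j},
          e2 ((((k : ℤ) : ℝ) - ((j : ℤ) : ℝ)) * (d' + ε)) * ENNReal.ofReal (a j) := by
      refine tsum_congr fun j => ?_
      rw [← hdd]
      congr 2
      push_cast
      ring
    rw [heq]
    calc e2 (((k : ℤ) : ℝ) * α * p) * (∑' j : {j : ℤ // (k : ℤ) + 1 ≤ j},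
          e2 ((((k : ℤ) : ℝ) - ((j : ℤ) : ℝ)) * (d' + ε)) * ENNReal.ofReal (a j)) ^ p
        ≤ e2 (((k : ℤ) : ℝ) * α * p) * (C1 * U (k : ℤ)) := mul_le_mul_right (h1) _
      _ = C1 * (e2 (((k : ℤ) : ℝ) * α * p) * U (k : ℤ)) := by ring
  have hD : (∑' k : {k : ℤ // k ≤ k₀}, e2 (((k : ℤ) : ℝ) * α * p) * U (k : ℤ))
      ≤ (c * e2 (-β) + c * c' * e2 (-(ε * p))) * (e2 ((k₀ : ℝ) * lam * p) * M ^ p) := by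
    have hDeq : (∑' k : {k : ℤ // k ≤ k₀}, e2 (((k : ℤ) : ℝ) * α * p) * U (k : ℤ))
        = ∑' j : ℤ, ∑' k : ℤ, (if k ≤ k₀ ∧ k + 1 ≤ j then
            e2 ((k : ℝ) * β) * (e2 (-(j : ℝ) * (d' * p)) * ENNReal.ofReal (a j) ^ p)
          else 0) := by
      rw [HMaux.tsum_if (fun k => e2 ((k : ℝ) * α * p) * U k), ← ENNReal.tsum_comm]
      refine tsum_congr fun k => ?_
      by_cases hk : k ≤ k₀
      · rw [if_pos hk, hU]
        beta_reduce
        rw [HMaux.tsum_if (fun j => e2 (((k : ℝ) - (j : ℝ)) * d' * p) * ENNReal.ofReal (a j) ^ p)]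
        rw [← ENNReal.tsum_mul_left]
        refine tsum_congr fun j => ?_
        by_cases hj : k + 1 ≤ j
        · rw [if_pos hj, if_pos ⟨hk, hj⟩, ← mul_assoc, ← mul_assoc, ← e2_add, ← e2_add]
          congr 2
          rw [hβdef]
          ring
        · rw [if_neg hj, if_neg (by tauto), mul_zero]
      · refine (if_neg hk).trans ?_
        exact ((tsum_congr fun j => if_neg (by tauto)).trans tsum_zero).symm
    have hinner : ∀ j : ℤ, (∑' k : ℤ, (if k ≤ k₀ ∧ k + 1 ≤ j then
        e2 ((k : ℝ) * β) * (e2 (-(j : ℝ) * (d' * p)) * ENNReal.ofReal (a j) ^ p) else 0))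
        = (e2 (((min k₀ (j - 1) : ℤ) : ℝ) * β) * c) *
            (e2 (-(j : ℝ) * (d' * p)) * ENNReal.ofReal (a j) ^ p) := by
      intro j
      have h1 : ∀ k : ℤ, (if k ≤ k₀ ∧ k + 1 ≤ j then
          e2 ((k : ℝ) * β) * (e2 (-(j : ℝ) * (d' * p)) * ENNReal.ofReal (a j) ^ p) else 0)
          = (if k ≤ min k₀ (j - 1) then e2 ((k : ℝ) * β) else 0) *
              (e2 (-(j : ℝ) * (d' * p)) * ENNReal.ofReal (a j) ^ p) := by
        intro k
        by_cases hk : k ≤ k₀ ∧ k + 1 ≤ j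
        · rw [if_pos hk, if_pos (by omega)]
        · rw [if_neg hk, if_neg (by omega), zero_mul]
      rw [tsum_congr h1, ENNReal.tsum_mul_right]
      congr 1
      rw [← HMaux.tsum_if (fun k => e2 ((k : ℝ) * β))]
      exact HMaux.geom_le β (min k₀ (j - 1))
    rw [hDeq]
    calc (∑' j : ℤ, ∑' k : ℤ, (if k ≤ k₀ ∧ k + 1 ≤ j then
            e2 ((k : ℝ) * β) * (e2 (-(j : ℝ) * (d' * p)) * ENNReal.ofReal (a j) ^ p) else 0))
        = ∑' j : ℤ, (e2 (((min k₀ (j - 1) : ℤ) : ℝ) * β) * c) *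
            (e2 (-(j : ℝ) * (d' * p)) * ENNReal.ofReal (a j) ^ p) := tsum_congr hinner
      _ ≤ ∑' j : ℤ, ((if j ≤ k₀ then
              c * e2 (-β) * (e2 ((j : ℝ) * α * p) * ENNReal.ofReal (a j) ^ p) else 0)
            + (if k₀ + 1 ≤ j then
              (c * e2 ((k₀ : ℝ) * β) * M ^ p) * e2 (-(j : ℝ) * (ε * p)) else 0)) := by
          refine ENNReal.tsum_le_tsum fun j => ?_
          by_cases hj : j ≤ k₀
          · rw [min_eq_right (by omega : j - 1 ≤ k₀), if_pos hj, if_neg (by omega), add_zero]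
            apply le_of_eq
            have h6 : e2 ((((j - 1 : ℤ)) : ℝ) * β) * e2 (-(j : ℝ) * (d' * p))
                = e2 (-β) * e2 ((j : ℝ) * α * p) := by
              rw [← e2_add, ← e2_add]
              congr 1
              push_cast
              rw [hβdef]
              ring
            calc (e2 ((((j - 1 : ℤ)) : ℝ) * β) * c) *
                  (e2 (-(j : ℝ) * (d' * p)) * ENNReal.ofReal (a j) ^ p)
                = (e2 ((((j - 1 : ℤ)) : ℝ) * β) * e2 (-(j : ℝ) * (d' * p))) *
                    (c * ENNReal.ofReal (a j) ^ p) := by ring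
              _ = (e2 (-β) * e2 ((j : ℝ) * α * p)) * (c * ENNReal.ofReal (a j) ^ p) := by
                  rw [h6]
              _ = c * e2 (-β) * (e2 ((j : ℝ) * α * p) * ENNReal.ofReal (a j) ^ p) := by ring
          · have hj' : k₀ + 1 ≤ j := by omega
            rw [min_eq_left (by omega : k₀ ≤ j - 1), if_neg hj, if_pos hj', zero_add]
            have hb : ENNReal.ofReal (a j) ^ p ≤ e2 ((j : ℝ) * (lam - α) * p) * M ^ p := by
              have h7 := ENNReal.rpow_le_rpow (hkey j) hp.le
              rwa [ENNReal.mul_rpow_of_nonneg _ _ hp.le, e2_rpow] at h7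
            have h6 : e2 (-(j : ℝ) * (d' * p)) * e2 ((j : ℝ) * (lam - α) * p)
                = e2 (-(j : ℝ) * (ε * p)) := by
              rw [← e2_add]
              congr 1
              rw [hd'def, hεdef]
              ring
            calc (e2 (((k₀ : ℤ) : ℝ) * β) * c) *
                  (e2 (-(j : ℝ) * (d' * p)) * ENNReal.ofReal (a j) ^ p)
                ≤ (e2 (((k₀ : ℤ) : ℝ) * β) * c) *
                  (e2 (-(j : ℝ) * (d' * p)) * (e2 ((j : ℝ) * (lam - α) * p) * M ^ p)) := by
                  exact mul_le_mul_right (mul_le_mul_right hb _) _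
              _ = (e2 (-(j : ℝ) * (d' * p)) * e2 ((j : ℝ) * (lam - α) * p)) *
                    (e2 (((k₀ : ℤ) : ℝ) * β) * c * M ^ p) := by ring
              _ = (c * e2 ((k₀ : ℝ) * β) * M ^ p) * e2 (-(j : ℝ) * (ε * p)) := by
                  rw [h6]; push_cast; ring
      _ = (∑' j : ℤ, (if j ≤ k₀ then
              c * e2 (-β) * (e2 ((j : ℝ) * α * p) * ENNReal.ofReal (a j) ^ p) else 0))
            + (∑' j : ℤ, (if k₀ + 1 ≤ j then
              (c * e2 ((k₀ : ℝ) * β) * M ^ p) * e2 (-(j : ℝ) * (ε * p)) else 0)) :=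
          ENNReal.tsum_add
      _ ≤ (c * e2 (-β) + c * c' * e2 (-(ε * p))) * (e2 ((k₀ : ℝ) * lam * p) * M ^ p) := by
          have hfirst : (∑' j : ℤ, (if j ≤ k₀ then
              c * e2 (-β) * (e2 ((j : ℝ) * α * p) * ENNReal.ofReal (a j) ^ p) else 0))
              ≤ c * e2 (-β) * (e2 ((k₀ : ℝ) * lam * p) * M ^ p) := by
            have h8 : ∀ j : ℤ, (if j ≤ k₀ then
                c * e2 (-β) * (e2 ((j : ℝ) * α * p) * ENNReal.ofReal (a j) ^ p) else 0)
                = c * e2 (-β) * (if j ≤ k₀ then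
                    e2 ((j : ℝ) * α * p) * ENNReal.ofReal (a j) ^ p else 0) := by
              intro j; split_ifs <;> simp
            rw [tsum_congr h8, ENNReal.tsum_mul_left,
              ← HMaux.tsum_if (fun j => e2 ((j : ℝ) * α * p) * ENNReal.ofReal (a j) ^ p)]
            exact mul_le_mul_right (hsum k₀) _
          have hsecond : (∑' j : ℤ, (if k₀ + 1 ≤ j then
              (c * e2 ((k₀ : ℝ) * β) * M ^ p) * e2 (-(j : ℝ) * (ε * p)) else 0))
              = c * c' * e2 (-(ε * p)) * (e2 ((k₀ : ℝ) * lam * p) * M ^ p) := by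
            rw [← HMaux.tsum_if (fun j => (c * e2 ((k₀ : ℝ) * β) * M ^ p) *
              e2 (-(j : ℝ) * (ε * p))), ENNReal.tsum_mul_left, HMaux.geom_ge]
            have h9 : e2 ((k₀ : ℝ) * β) * e2 (-((k₀ : ℝ) + 1) * (ε * p))
                = e2 (-(ε * p)) * e2 ((k₀ : ℝ) * lam * p) := by
              rw [← e2_add, ← e2_add]
              congr 1
              rw [show (k₀ : ℝ) * lam * p = (k₀ : ℝ) * (lam * p) by ring, hlbp]
              ring
            calc (c * e2 ((k₀ : ℝ) * β) * M ^ p) * (e2 (-((k₀ : ℝ) + 1) * (ε * p)) * c')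
                = (e2 ((k₀ : ℝ) * β) * e2 (-((k₀ : ℝ) + 1) * (ε * p))) * (c * c' * M ^ p) := by
                  ring
              _ = (e2 (-(ε * p)) * e2 ((k₀ : ℝ) * lam * p)) * (c * c' * M ^ p) := by rw [h9]
              _ = c * c' * e2 (-(ε * p)) * (e2 ((k₀ : ℝ) * lam * p) * M ^ p) := by ring
          rw [hsecond, add_mul]
          exact add_le_add hfirst le_rfl
  -- put everything together
  have hT : (∑' k : {k : ℤ // k ≤ k₀},
      e2 (((k : ℤ) : ℝ) * α * p) *
        (∑' j : {j : ℤ // (k : ℤ) + 1 ≤ j},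
          e2 (((((k : ℤ) - (j : ℤ) : ℤ)) : ℝ) * d) * ENNReal.ofReal (a j)) ^ p)
      ≤ K0 * (e2 ((k₀ : ℝ) * lam * p) * M ^ p) := by
    calc (∑' k : {k : ℤ // k ≤ k₀},
        e2 (((k : ℤ) : ℝ) * α * p) *
          (∑' j : {j : ℤ // (k : ℤ) + 1 ≤ j},
            e2 (((((k : ℤ) - (j : ℤ) : ℤ)) : ℝ) * d) * ENNReal.ofReal (a j)) ^ p)
        ≤ ∑' k : {k : ℤ // k ≤ k₀}, C1 * (e2 (((k : ℤ) : ℝ) * α * p) * U (k : ℤ)) :=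
          ENNReal.tsum_le_tsum hstep
      _ = C1 * ∑' k : {k : ℤ // k ≤ k₀}, e2 (((k : ℤ) : ℝ) * α * p) * U (k : ℤ) :=
          ENNReal.tsum_mul_left
      _ ≤ C1 * ((c * e2 (-β) + c * c' * e2 (-(ε * p))) * (e2 ((k₀ : ℝ) * lam * p) * M ^ p)) :=
          mul_le_mul_right hD _
      _ = K0 * (e2 ((k₀ : ℝ) * lam * p) * M ^ p) := by rw [hK0]; ring
  calc e2 (-(k₀ : ℝ) * lam) *
      (∑' k : {k : ℤ // k ≤ k₀},
        e2 (((k : ℤ) : ℝ) * α * p) *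
          (∑' j : {j : ℤ // (k : ℤ) + 1 ≤ j},
            e2 (((((k : ℤ) - (j : ℤ) : ℤ)) : ℝ) * d) * ENNReal.ofReal (a j)) ^ p) ^ (1 / p)
      ≤ e2 (-(k₀ : ℝ) * lam) * (K0 * (e2 ((k₀ : ℝ) * lam * p) * M ^ p)) ^ (1 / p) :=
        mul_le_mul_right (ENNReal.rpow_le_rpow hT (by positivity)) _
    _ = e2 (-(k₀ : ℝ) * lam) * (K * (e2 ((k₀ : ℝ) * lam) * M)) := by
        rw [ENNReal.mul_rpow_of_nonneg K0 (e2 ((k₀ : ℝ) * lam * p) * M ^ p) (by positivity),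
          ENNReal.mul_rpow_of_nonneg (e2 ((k₀ : ℝ) * lam * p)) (M ^ p) (by positivity),
          e2_rpow,
          show (k₀ : ℝ) * lam * p * (1 / p) = (k₀ : ℝ) * lam by field_simp,
          ← ENNReal.rpow_mul, mul_one_div, div_self hp.ne', ENNReal.rpow_one, hKdef]
    _ = K * M := by
        rw [show e2 (-(k₀ : ℝ) * lam) * (K * (e2 ((k₀ : ℝ) * lam) * M))
          = (e2 (-(k₀ : ℝ) * lam) * e2 ((k₀ : ℝ) * lam)) * (K * M) by ring,
          ← e2_add, show -(k₀ : ℝ) * lam + (k₀ : ℝ) * lam = 0 by ring, e2_zero, one_mul]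
end
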